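/- Let A ∈ ℝ^{n×n} be a symmetric positive semidefinite matrix and B ∈ ℝ^{n×n} a symmetric matrix. Then every (complex) eigenvalue λ of the product AB is real and satisfies min{ ‖A‖ λ_min(B), 0 } ≤ λ ≤ max{ ‖A‖ λ_max(B), 0 }, where ‖A‖ is the operator norm of A and λ_min(B), λ_max(B) are the minimum and maximum eigenvalues of B. -/

import Mathlib

open Filter Topology

set_option maxHeartbeats 1000000
set_option synthInstance.maxHeartbeats 400000

namespace Statement12Aux

open Matrix ComplexOrder

variable {n : ℕ}

lemma mapC_mul (M N : Matrix (Fin n) (Fin n) ℝ) :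
    (M * N).map Complex.ofReal = M.map Complex.ofReal * N.map Complex.ofReal := by
  ext i j
  simp [Matrix.map_apply, Matrix.mul_apply]

lemma mapC_sub_smul_one (M : Matrix (Fin n) (Fin n) ℝ) (c : ℝ) :
    (M - c • 1).map Complex.ofReal = M.map Complex.ofReal - (c : ℂ) • 1 := by
  ext i j
  by_cases h : i = j <;>
    simp [Matrix.map_apply, Matrix.sub_apply, Matrix.smul_apply, Matrix.one_apply, h]

lemma mapC_smul_one_sub (M : Matrix (Fin n) (Fin n) ℝ) (c : ℝ) :
    (c • 1 - M).map Complex.ofReal = (c : ℂ) • 1 - M.map Complex.ofReal := by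
  ext i j
  by_cases h : i = j <;>
    simp [Matrix.map_apply, Matrix.sub_apply, Matrix.smul_apply, Matrix.one_apply, h]

lemma quad_le (A : Matrix (Fin n) (Fin n) ℝ) (x : Fin n → ℝ) :
    x ⬝ᵥ (A *ᵥ x) ≤ ‖Matrix.toEuclideanCLM (𝕜 := ℝ) A‖ * (x ⬝ᵥ x) := by
  set T := Matrix.toEuclideanCLM (𝕜 := ℝ) A with hT
  set x' : EuclideanSpace ℝ (Fin n) := (WithLp.equiv 2 _).symm x with hx'
  have h1 : inner ℝ x' (T x') = x ⬝ᵥ (A *ᵥ x) := by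
    rw [hT, hx']
    simp [PiLp.inner_apply, Matrix.toLin'_apply, dotProduct]
    exact Finset.sum_congr rfl fun i _ => mul_comm _ _
  have h2 : (inner ℝ x' x' : ℝ) = x ⬝ᵥ x := by
    simp [hx', PiLp.inner_apply, dotProduct]
    rw [EuclideanSpace.real_norm_sq_eq]; simp [sq]
  have h3 : (inner ℝ x' (T x') : ℝ) ≤ ‖x'‖ * ‖T x'‖ := real_inner_le_norm _ _
  have h4 : ‖T x'‖ ≤ ‖T‖ * ‖x'‖ := T.le_opNorm x'
  have h5 : ‖x'‖ * ‖x'‖ = x ⬝ᵥ x := by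
    rw [← h2, real_inner_self_eq_norm_mul_norm]
  have h6 : (0:ℝ) ≤ ‖T‖ := norm_nonneg _
  have h7 : (0:ℝ) ≤ ‖x'‖ := norm_nonneg _
  nlinarith

lemma psd_map {M : Matrix (Fin n) (Fin n) ℝ} (hM : M.PosSemidef) :
    (M.map Complex.ofReal).PosSemidef := by
  obtain ⟨X, rfl⟩ : ∃ X : Matrix (Fin n) (Fin n) ℝ, M = Xᴴ * X := by
    open scoped MatrixOrder in
    exact ⟨CFC.sqrt M, by rw [(CFC.sqrt_nonneg M).posSemidef.1.eq, CFC.sqrt_mul_sqrt_self M hM.nonneg]⟩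
  have h : (Xᴴ * X).map Complex.ofReal
      = (X.map Complex.ofReal)ᴴ * (X.map Complex.ofReal) := by
    rw [mapC_mul, Matrix.conjTranspose_map Complex.ofReal
      (fun x => (Complex.conj_ofReal x).symm)]
  rw [h]
  exact Matrix.posSemidef_conjTranspose_mul_self _

lemma psd_min {B : Matrix (Fin n) (Fin n) ℝ} (hB : B.IsHermitian) :
    (B - (⨅ i, hB.eigenvalues i) • 1).PosSemidef := by
  classical
  set c := ⨅ i, hB.eigenvalues i with hc
  have hUU : (hB.eigenvectorUnitary : Matrix (Fin n) (Fin n) ℝ)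
      * star (hB.eigenvectorUnitary : Matrix (Fin n) (Fin n) ℝ) = 1 :=
    Matrix.mem_unitaryGroup_iff.mp hB.eigenvectorUnitary.2
  have hd : diagonal (fun i => hB.eigenvalues i - c)
      = diagonal (RCLike.ofReal ∘ hB.eigenvalues) - c • (1 : Matrix (Fin n) (Fin n) ℝ) := by
    ext i j
    by_cases h : i = j <;>
      simp [h, Matrix.diagonal_apply, Matrix.one_apply, RCLike.ofReal_real_eq_id]
  have key : B - c • 1 =
      (hB.eigenvectorUnitary : Matrix (Fin n) (Fin n) ℝ)
        * diagonal (fun i => hB.eigenvalues i - c)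
        * star (hB.eigenvectorUnitary : Matrix (Fin n) (Fin n) ℝ) := by
    rw [hd, mul_sub, sub_mul]
    conv_lhs => rw [hB.spectral_theorem]
    rw [Unitary.conjStarAlgAut_apply]
    congr 1
    rw [Matrix.mul_smul, Matrix.mul_one, Matrix.smul_mul, hUU]
  rw [key]
  refine (Matrix.PosSemidef.diagonal ?_).mul_mul_conjTranspose_same _
  intro i
  simp only [Pi.zero_apply, sub_nonneg]
  exact ciInf_le (Set.Finite.bddBelow (Set.finite_range _)) i

lemma psd_max {B : Matrix (Fin n) (Fin n) ℝ} (hB : B.IsHermitian) :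
    ((⨆ i, hB.eigenvalues i) • 1 - B).PosSemidef := by
  classical
  set c := ⨆ i, hB.eigenvalues i with hc
  have hUU : (hB.eigenvectorUnitary : Matrix (Fin n) (Fin n) ℝ)
      * star (hB.eigenvectorUnitary : Matrix (Fin n) (Fin n) ℝ) = 1 :=
    Matrix.mem_unitaryGroup_iff.mp hB.eigenvectorUnitary.2
  have hd : diagonal (fun i => c - hB.eigenvalues i)
      = c • (1 : Matrix (Fin n) (Fin n) ℝ) - diagonal (RCLike.ofReal ∘ hB.eigenvalues) := by
    ext i j
    by_cases h : i = j <;>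
      simp [h, Matrix.diagonal_apply, Matrix.one_apply, RCLike.ofReal_real_eq_id]
  have key : c • 1 - B =
      (hB.eigenvectorUnitary : Matrix (Fin n) (Fin n) ℝ)
        * diagonal (fun i => c - hB.eigenvalues i)
        * star (hB.eigenvectorUnitary : Matrix (Fin n) (Fin n) ℝ) := by
    rw [hd, mul_sub, sub_mul]
    conv_lhs => rw [hB.spectral_theorem]
    rw [Unitary.conjStarAlgAut_apply]
    congr 1
    rw [Matrix.mul_smul, Matrix.mul_one, Matrix.smul_mul, hUU]
  rw [key]
  refine (Matrix.PosSemidef.diagonal ?_).mul_mul_conjTranspose_same _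
  intro i
  simp only [Pi.zero_apply, sub_nonneg]
  exact le_ciSup (Set.Finite.bddAbove (Set.finite_range _)) i

lemma psd_opNorm (A : Matrix (Fin n) (Fin n) ℝ) (hA : A.IsHermitian) :
    ((‖Matrix.toEuclideanCLM (𝕜 := ℝ) A‖) • 1 - A).PosSemidef := by
  refine .of_dotProduct_mulVec_nonneg ?_ fun x => ?_
  · have h1 : ((‖Matrix.toEuclideanCLM (𝕜 := ℝ) A‖) • (1 : Matrix (Fin n) (Fin n) ℝ)).IsHermitian := by
      simp [Matrix.IsHermitian, Matrix.conjTranspose_smul]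
    exact h1.sub hA
  · have := quad_le A x
    simp only [Matrix.sub_mulVec, Matrix.smul_mulVec, Matrix.one_mulVec,
      dotProduct_sub, dotProduct_smul, star_trivial, smul_eq_mul]
    linarith

end Statement12Aux

open Matrix ComplexOrder in
/-- Lemma A.1. -/
theorem statement12 {n : ℕ} (A B : Matrix (Fin n) (Fin n) ℝ)
    (hA : A.PosSemidef) (hB : B.IsHermitian) :
    ∀ lam ∈ spectrum ℂ ((A * B).map Complex.ofReal),
      ∃ r : ℝ, lam = (r : ℂ) ∧
        min (‖Matrix.toEuclideanCLM (𝕜 := ℝ) A‖ * (⨅ i, hB.eigenvalues i)) 0 ≤ r ∧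
        r ≤ max (‖Matrix.toEuclideanCLM (𝕜 := ℝ) A‖ * (⨆ i, hB.eigenvalues i)) 0 := by
  classical
  intro lam hlam
  by_cases h0 : lam = 0
  · exact ⟨0, by simp [h0], min_le_right _ _, le_max_right _ _⟩
  set a := ‖Matrix.toEuclideanCLM (𝕜 := ℝ) A‖ with ha_def
  have ha : 0 ≤ a := norm_nonneg _
  set bmin := ⨅ i, hB.eigenvalues i with hbmin
  set bmax := ⨆ i, hB.eigenvalues i with hbmax
  set S := (open scoped MatrixOrder in CFC.sqrt A) with hS_def
  have hS : S.PosSemidef := by open scoped MatrixOrder in exact (CFC.sqrt_nonneg A).posSemidef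
  have hSS : S * S = A := by open scoped MatrixOrder in exact CFC.sqrt_mul_sqrt_self A hA.nonneg
  set C := S * B * S with hC_def
  -- move lam to the spectrum of (S*B*S).map
  have hlam2 : lam ∈ spectrum ℂ (C.map Complex.ofReal) := by
    have e1 : (A * B).map Complex.ofReal
        = (S.map Complex.ofReal) * ((S * B).map Complex.ofReal) := by
      rw [← Statement12Aux.mapC_mul, ← mul_assoc, hSS]
    have e2 : C.map Complex.ofReal
        = ((S * B).map Complex.ofReal) * (S.map Complex.ofReal) := by
      rw [← Statement12Aux.mapC_mul]
    have hmem : lam ∈ spectrum ℂ ((S.map Complex.ofReal) * ((S * B).map Complex.ofReal))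
        \ {0} := ⟨by rwa [e1] at hlam, h0⟩
    rw [spectrum.nonzero_mul_comm] at hmem
    rw [e2]
    exact hmem.1
  -- Hermitian facts
  have hCr : C.IsHermitian := by
    show Cᴴ = C
    rw [hC_def, Matrix.conjTranspose_mul, Matrix.conjTranspose_mul, hS.1.eq, hB.eq, mul_assoc]
  -- eigenvector
  have hev : Module.End.HasEigenvalue
      ((Matrix.toLinAlgEquiv (Pi.basisFun ℂ (Fin n))) (C.map Complex.ofReal)) lam := by
    rw [Module.End.hasEigenvalue_iff_mem_spectrum, AlgEquiv.spectrum_eq]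
    exact hlam2
  obtain ⟨v, hv⟩ := hev.exists_hasEigenvector
  have hv0 : v ≠ 0 := hv.right
  have hMv : (C.map Complex.ofReal) *ᵥ v = lam • v := by
    have h := hv.apply_eq_smul
    rw [Matrix.toLinAlgEquiv_apply] at h
    have hsum : ∀ u : Fin n → ℂ, ∑ j, u j • (Pi.basisFun ℂ (Fin n)) j = u := by
      intro u
      ext i
      simp [Pi.basisFun_apply, Finset.sum_apply, Pi.single_apply]
    have hrepr : ⇑((Pi.basisFun ℂ (Fin n)).repr v) = v := funext fun i => Pi.basisFun_repr ℂ (Fin n) v i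
    rw [hrepr, hsum] at h
    exact h
    -- setup
  set S' := S.map Complex.ofReal with hS'def
  set B' := B.map Complex.ofReal with hB'def
  have hS'H : S'ᴴ = S' := hS.1.map Complex.ofReal fun x => (Complex.conj_ofReal x).symm
  set w := S' *ᵥ v with hw
  have key : ∀ N : Matrix (Fin n) (Fin n) ℂ,
      star w ⬝ᵥ (N *ᵥ w) = star v ⬝ᵥ ((S' * (N * S')) *ᵥ v) := fun N => by
    rw [hw, Matrix.star_mulVec, Matrix.mulVec_mulVec, ← Matrix.dotProduct_mulVec,
      Matrix.mulVec_mulVec, hS'H]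
  have hCmap : C.map Complex.ofReal = S' * (B' * S') := by
    rw [hC_def, Statement12Aux.mapC_mul, Statement12Aux.mapC_mul, mul_assoc]
  have hAmap : A.map Complex.ofReal = S' * ((1 : Matrix (Fin n) (Fin n) ℂ) * S') := by
    rw [← hSS, Statement12Aux.mapC_mul, one_mul]
  set t := star v ⬝ᵥ v with ht_def
  set T : ℝ := ∑ i, Complex.normSq (v i) with hT_def
  have hT_pos : 0 < T := by
    obtain ⟨i, hi⟩ := Function.ne_iff.mp hv0
    exact Finset.sum_pos' (fun j _ => Complex.normSq_nonneg _)
      ⟨i, Finset.mem_univ i, Complex.normSq_pos.mpr hi⟩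
  have ht : t = (T : ℂ) := by
    rw [ht_def, dotProduct, hT_def]
    push_cast
    exact Finset.sum_congr rfl fun i _ => (Complex.normSq_eq_conj_mul_self).symm
  set t' := star w ⬝ᵥ w with ht'_def
  set q := star w ⬝ᵥ (B' *ᵥ w) with hq_def
  have hq : q = lam * t := by
    rw [hq_def, key B', ← hCmap, hMv, ht_def, dotProduct_smul, smul_eq_mul]
  have ht' : t' = star v ⬝ᵥ ((A.map Complex.ofReal) *ᵥ v) := by
    rw [ht'_def, show star w ⬝ᵥ w = star w ⬝ᵥ ((1 : Matrix (Fin n) (Fin n) ℂ) *ᵥ w) by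
      rw [Matrix.one_mulVec], key 1, ← hAmap]
  have h1 : (0 : ℂ) ≤ q - (bmin : ℂ) * t' := by
    have hp := (Statement12Aux.psd_map (Statement12Aux.psd_min hB)).dotProduct_mulVec_nonneg w
    rw [Statement12Aux.mapC_sub_smul_one, Matrix.sub_mulVec, Matrix.smul_mulVec,
      Matrix.one_mulVec, dotProduct_sub, dotProduct_smul] at hp
    simpa [← hq_def, ← ht'_def, ← hbmin, smul_eq_mul] using hp
  have h2 : (0 : ℂ) ≤ (bmax : ℂ) * t' - q := by
    have hp := (Statement12Aux.psd_map (Statement12Aux.psd_max hB)).dotProduct_mulVec_nonneg w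
    rw [Statement12Aux.mapC_smul_one_sub, Matrix.sub_mulVec, Matrix.smul_mulVec,
      Matrix.one_mulVec, dotProduct_sub, dotProduct_smul] at hp
    simpa [← hq_def, ← ht'_def, ← hbmax, smul_eq_mul] using hp
  have h3 : (0 : ℂ) ≤ (a : ℂ) * (T : ℂ) - t' := by
    have hp := (Statement12Aux.psd_map (Statement12Aux.psd_opNorm A hA.1)).dotProduct_mulVec_nonneg v
    rw [Statement12Aux.mapC_smul_one_sub, Matrix.sub_mulVec, Matrix.smul_mulVec,
      Matrix.one_mulVec, dotProduct_sub, dotProduct_smul] at hp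
    rw [← ht', ← ht_def, ht] at hp
    simpa [← ha_def, smul_eq_mul] using hp
  have h4 : (0 : ℂ) ≤ t' := by
    have hp := (Statement12Aux.psd_map hA).dotProduct_mulVec_nonneg v
    rwa [← ht'] at hp
  -- extract real parts
  have h4' := Complex.le_def.mp h4
  have hT'0 : (0:ℝ) ≤ t'.re := by simpa using h4'.1
  have ht'im : t'.im = 0 := by simpa using (h4'.2).symm
  have h1' := Complex.le_def.mp h1
  have h2' := Complex.le_def.mp h2
  have h3' := Complex.le_def.mp h3
  have hqim : q.im = 0 := by
    have h := h1'.2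
    simp [Complex.sub_im, Complex.mul_im, ht'im, Complex.ofReal_im, Complex.ofReal_re] at h
    linarith
  have hQ1 : bmin * t'.re ≤ q.re := by
    have h := h1'.1
    simp [Complex.sub_re, Complex.mul_re, ht'im, Complex.ofReal_im, Complex.ofReal_re] at h
    linarith
  have hQ2 : q.re ≤ bmax * t'.re := by
    have h := h2'.1
    simp [Complex.sub_re, Complex.mul_re, ht'im, Complex.ofReal_im, Complex.ofReal_re] at h
    linarith
  have hT'le : t'.re ≤ a * T := by
    have h := h3'.1
    simp [Complex.sub_re, Complex.mul_re, Complex.ofReal_im, Complex.ofReal_re] at h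
    linarith
  have hq_real : q = ((q.re : ℝ) : ℂ) := Complex.ext rfl (by simp [hqim])
  have hTne : (T : ℂ) ≠ 0 := by exact_mod_cast hT_pos.ne'
  refine ⟨q.re / T, ?_, ?_, ?_⟩
  · rw [Complex.ofReal_div, eq_div_iff hTne, ← ht, ← hq]
    exact hq_real
  · rw [le_div_iff₀ hT_pos]
    rcases le_total bmin 0 with hb | hb
    · have hmin : min (a * bmin) 0 = a * bmin := by
        refine min_eq_left ?_
        nlinarith [mul_nonneg ha (neg_nonneg.2 hb)]
      rw [hmin]
      nlinarith [mul_nonneg (neg_nonneg.2 hb) (sub_nonneg.2 hT'le)]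
    · have hmin : min (a * bmin) 0 ≤ 0 := min_le_right _ _
      nlinarith [mul_nonneg hb hT'0]
  · rw [div_le_iff₀ hT_pos]
    rcases le_total 0 bmax with hb | hb
    · have hmax : max (a * bmax) 0 = a * bmax := max_eq_left (mul_nonneg ha hb)
      rw [hmax]
      nlinarith [mul_nonneg hb (sub_nonneg.2 hT'le)]
    · have hmax : (0:ℝ) ≤ max (a * bmax) 0 := le_max_right _ _
      nlinarith [mul_nonneg (neg_nonneg.2 hb) hT'0]
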